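/- For F ∈ [1/d, 1], the trace norm of the partial transpose of the isotropic state equals dF: the sum of the absolute values of the eigenvalues of ρ_F^Γ is exactly d·F. Consequently the logarithmic negativity of ρ_F equals log(dF) = log d + log F, which is extensive (of order log d) even when F is exponentially small in log d, as long as dF ≥ 1. -/

import Mathlib

open Matrix

/-- The maximally entangled unit vector `v = d^{-1/2} Σ_i e_i ⊗ e_i` in `ℂ^d ⊗ ℂ^d`. -/
noncomputable def maxEntVec (d : ℕ) : (Fin d × Fin d) → ℂ :=
  fun p => if p.1 = p.2 then ((1 / Real.sqrt d : ℝ) : ℂ) else 0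

/-- The orthogonal projection `P = v v†` onto the maximally entangled vector. -/
noncomputable def projMaxEnt (d : ℕ) : Matrix (Fin d × Fin d) (Fin d × Fin d) ℂ :=
  Matrix.vecMulVec (maxEntVec d) (star (maxEntVec d))

/-- The isotropic state `ρ_F = F·P + ((1−F)/(d²−1))·(I − P)`. -/
noncomputable def isoState (d : ℕ) (F : ℝ) : Matrix (Fin d × Fin d) (Fin d × Fin d) ℂ :=
  (F : ℂ) • projMaxEnt d + (((1 - F) / ((d : ℝ) ^ 2 - 1) : ℝ) : ℂ) • (1 - projMaxEnt d)

/-- The partial transpose on the second tensor factor: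
`(M^Γ)_{(i,j),(k,l)} = M_{(i,l),(k,j)}`. -/
def ptranspose {d : ℕ} (M : Matrix (Fin d × Fin d) (Fin d × Fin d) ℂ) :
    Matrix (Fin d × Fin d) (Fin d × Fin d) ℂ :=
  Matrix.of fun p q => M (p.1, q.2) (q.1, p.2)

/-- swap matrix -/
def swapM (d : ℕ) : Matrix (Fin d × Fin d) (Fin d × Fin d) ℂ :=
  Matrix.of fun p q => if p.1 = q.2 ∧ p.2 = q.1 then 1 else 0

lemma swapM_sq (d : ℕ) : swapM d * swapM d = 1 := by
  ext p q
  rw [mul_apply, Finset.sum_eq_single (p.2, p.1)]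
  · simp [swapM, one_apply, Prod.ext_iff, and_comm]
  · intro r _ hr
    have : ¬(p.1 = r.2 ∧ p.2 = r.1) := by
      rintro ⟨h1, h2⟩; exact hr (by ext <;> simp [← h1, ← h2])
    simp [swapM, this]
  · intro h; exact absurd (Finset.mem_univ _) h

lemma projMaxEnt_apply (d : ℕ) (p q : Fin d × Fin d) :
    projMaxEnt d p q = if p.1 = p.2 ∧ q.1 = q.2 then ((d : ℂ))⁻¹ else 0 := by
  have hsq : (Real.sqrt d) * (Real.sqrt d) = d := Real.mul_self_sqrt (by positivity)
  have hs2 : ((1 / Real.sqrt d : ℝ) : ℂ) * ((1 / Real.sqrt d : ℝ) : ℂ) = ((d : ℂ))⁻¹ := by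
    rw [← Complex.ofReal_mul,
      show (1 / Real.sqrt d) * (1 / Real.sqrt d) = (Real.sqrt d * Real.sqrt d)⁻¹ by field_simp,
      hsq]; push_cast; ring
  simp only [projMaxEnt, maxEntVec, vecMulVec_apply, Pi.star_apply, Complex.star_def,
    apply_ite (starRingEnd ℂ), Complex.conj_ofReal, map_zero]
  split_ifs with h1 h2 h3 h4 <;> simp_all [hs2]

lemma ptranspose_isoState_eq (d : ℕ) (hd : 2 ≤ d) (F : ℝ) :
    ptranspose (isoState d F) =
      (((F - (1 - F) / ((d : ℝ) ^ 2 - 1)) / d : ℝ)) • swapM d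
        + (((1 - F) / ((d : ℝ) ^ 2 - 1) : ℝ)) • (1 : Matrix (Fin d × Fin d) (Fin d × Fin d) ℂ) := by
  have hd0 : (d : ℝ) ≠ 0 := by positivity
  have hdC : (d : ℂ) ≠ 0 := by exact_mod_cast hd0
  have hne : ((d : ℂ) ^ 2 - 1) ≠ 0 := by
    have : ((d : ℝ) ^ 2 - 1) ≠ 0 := by nlinarith [show (2:ℝ) ≤ d by exact_mod_cast hd]
    exact_mod_cast this
  ext ⟨i, j⟩ ⟨k, l⟩
  simp only [ptranspose, isoState, Matrix.of_apply, Matrix.add_apply, Matrix.smul_apply,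
    Matrix.sub_apply, Matrix.one_apply, projMaxEnt_apply, swapM, Prod.mk.injEq, Prod.ext_iff,
    smul_eq_mul, eq_comm]
  push_cast
  split_ifs <;>
    (simp only [Complex.real_smul, smul_zero, smul_eq_mul, mul_one, mul_zero, add_zero, zero_add];
     push_cast; field_simp; try ring)

lemma trace_swapM (d : ℕ) : Matrix.trace (swapM d) = (d : ℂ) := by
  have hiff : ∀ i j : Fin d, ((i = j ∧ j = i)) ↔ (j = i) := by
    intro i j; constructor
    · rintro ⟨h, -⟩; exact h.symm
    · rintro rfl; exact ⟨rfl, rfl⟩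
  simp only [Matrix.trace, Matrix.diag, swapM, Matrix.of_apply, hiff]
  rw [Fintype.sum_prod_type]
  simp

/-- For `F ∈ [1/d, 1]`, the trace norm of the partial transpose of the isotropic state
(the sum of the absolute values of the eigenvalues of `ρ_F^Γ`) equals `d·F`, and hence
the logarithmic negativity of `ρ_F` equals `log(dF) = log d + log F`. -/
theorem traceNorm_ptranspose_isoState (d : ℕ) (hd : 2 ≤ d) (F : ℝ)
    (hF : F ∈ Set.Icc (1 / (d : ℝ)) 1)
    (hH : (ptranspose (isoState d F)).IsHermitian) :
    ∑ i, |hH.eigenvalues i| = d * F ∧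
      Real.log (∑ i, |hH.eigenvalues i|) = Real.log d + Real.log F := by
  obtain ⟨hF1, hF2⟩ := hF
  have hdR : (2 : ℝ) ≤ d := by exact_mod_cast hd
  have hd0 : (0 : ℝ) < d := by linarith
  have hD : (0 : ℝ) < (d : ℝ) ^ 2 - 1 := by nlinarith
  have hFd : 1 ≤ F * d := by
    rw [div_le_iff₀ hd0] at hF1; linarith
  have hF0 : 0 < F := by nlinarith
  set c : ℝ := (1 - F) / ((d : ℝ) ^ 2 - 1) with hc
  set s : ℝ := (F - c) / d with hs
  have hcnn : 0 ≤ c := div_nonneg (by linarith) (le_of_lt hD)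
  have hs_eq : s = (F * d ^ 2 - 1) / (d * ((d : ℝ) ^ 2 - 1)) := by
    rw [hs, hc]; field_simp; ring
  have hspos : 0 < s := by
    rw [hs_eq]
    apply div_pos _ (by positivity)
    nlinarith
  have hcs : c ≤ s := by
    rw [hs_eq, hc, div_le_div_iff₀ hD (by positivity)]
    nlinarith [mul_nonneg (mul_nonneg hD.le (show (0:ℝ) ≤ (d:ℝ)+1 by linarith))
      (show (0:ℝ) ≤ F*d-1 by linarith)]
  have hM : ptranspose (isoState d F) = s • swapM d + c • 1 :=
    ptranspose_isoState_eq d hd F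
  set M := ptranspose (isoState d F) with hMdef
  -- square identity
  have hsq : M * M = (2 * c) • M + (s ^ 2 - c ^ 2) • 1 := by
    rw [hM, add_mul, mul_add, mul_add, smul_mul_assoc, smul_mul_assoc, smul_mul_assoc,
      smul_mul_assoc, mul_smul_comm, mul_smul_comm, mul_smul_comm, mul_smul_comm,
      swapM_sq, one_mul, mul_one, mul_one]
    rw [smul_add]
    module
  -- eigenvalue dichotomy
  have heig : ∀ i, hH.eigenvalues i = c + s ∨ hH.eigenvalues i = c - s := by
    intro i
    set lam := hH.eigenvalues i with hlam
    have hv := hH.mulVec_eigenvectorBasis i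
    set v : (Fin d × Fin d) → ℂ := ⇑(hH.eigenvectorBasis i) with hvdef
    have hv0 : v ≠ 0 := by
      intro h; apply hH.eigenvectorBasis.orthonormal.ne_zero i; ext j; exact congrFun h j
    have h2 : (M * M) *ᵥ v = (lam * lam) • v := by
      rw [← mulVec_mulVec, hv, mulVec_smul, hv, smul_smul]
    rw [hsq, add_mulVec, smul_mulVec, smul_mulVec, one_mulVec, hv,
      smul_smul] at h2
    have h3 : ((lam * lam) - (2 * c * lam + (s ^ 2 - c ^ 2))) • v = 0 := by
      rw [sub_smul, add_smul, h2]; abel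
    have h4 : (lam * lam) - (2 * c * lam + (s ^ 2 - c ^ 2)) = 0 :=
      (smul_eq_zero.mp h3).resolve_right hv0
    have h5 : (lam - (c + s)) * (lam - (c - s)) = 0 := by linear_combination h4
    rcases mul_eq_zero.mp h5 with h | h
    · left; linarith [sub_eq_zero.mp h]
    · right; linarith [sub_eq_zero.mp h]
  -- trace
  have htrC : ∑ i, (hH.eigenvalues i : ℂ) = Matrix.trace M := by
    conv_rhs => rw [hH.spectral_theorem, Unitary.conjStarAlgAut_apply]
    rw [Matrix.trace_mul_cycle,
      mem_unitaryGroup_iff'.mp (hH.eigenvectorUnitary).2, one_mul, Matrix.trace_diagonal]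
    simp
  have htrM : Matrix.trace M = ((1 : ℝ) : ℂ) := by
    rw [hM, Matrix.trace_add, Matrix.trace_smul, Matrix.trace_smul, trace_swapM,
      Matrix.trace_one]
    have hcard : (Fintype.card (Fin d × Fin d) : ℂ) = (d : ℂ) * d := by
      simp [Fintype.card_prod]; try ring
    rw [hcard, Complex.real_smul, Complex.real_smul]
    have hD0 : ((d : ℝ) ^ 2 - 1) ≠ 0 := ne_of_gt hD
    have hd0' : (d : ℝ) ≠ 0 := ne_of_gt hd0
    have hDC : ((d : ℂ) ^ 2 - 1) ≠ 0 := by exact_mod_cast hD0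
    have hdC : (d : ℂ) ≠ 0 := by exact_mod_cast hd0'
    rw [hs, hc]
    push_cast
    field_simp
    ring
  have htr : ∑ i, hH.eigenvalues i = 1 := by
    have h1 := htrC.trans htrM
    rw [← Complex.ofReal_sum] at h1
    exact_mod_cast h1
  -- abs formula
  have habs : ∀ i, |hH.eigenvalues i| = (c * hH.eigenvalues i - (c ^ 2 - s ^ 2)) / s := by
    intro i
    rcases heig i with h | h <;> rw [h]
    · rw [abs_of_nonneg (by linarith)]
      field_simp
      ring
    · rw [abs_of_nonpos (by linarith)]
      field_simp
      ring
  have hsum : ∑ i, |hH.eigenvalues i| = d * F := by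
    rw [Finset.sum_congr rfl (fun i _ => habs i)]
    rw [← Finset.sum_div, Finset.sum_sub_distrib, ← Finset.mul_sum, htr,
      Finset.sum_const, Finset.card_univ, Fintype.card_prod, Fintype.card_fin]
    have hD0 : ((d : ℝ) ^ 2 - 1) ≠ 0 := ne_of_gt hD
    have hd0' : (d : ℝ) ≠ 0 := ne_of_gt hd0
    rw [hs_eq, hc]
    have hnum : F * (d : ℝ) ^ 2 - 1 ≠ 0 := by nlinarith
    simp only [nsmul_eq_mul]; push_cast
    field_simp
    ring
  refine ⟨hsum, ?_⟩
  rw [hsum, Real.log_mul (ne_of_gt hd0) (ne_of_gt hF0)]
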